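/- Let 𝒲 be a reduced cyclic word and (P,Q) ∈ 𝕃ℙ₁(𝒲). Then the linear words W₁ and W₂ from the definition of δ₁(P,Q) and δ₂(P,Q) are disjoint occurrences in 𝒲 and both are non-empty; moreover 𝒲 = c(W₁W₂) when (P,Q) has type (1) or (2), and 𝒲 = c(YW₁ȲW₂) when (P,Q) has type (3). -/

import Mathlib

open List

namespace CyclicWords

/-- A letter of the alphabet `𝔸ₙ = {a₁,…,aₙ, ā₁,…,āₙ}`: a generator index together
with a Boolean recording whether the letter is barred. -/
abbrev Letter (n : ℕ) := Bool × Fin n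

/-- The involution `x ↦ x̄` on letters. -/
def Letter.bar {n : ℕ} (x : Letter n) : Letter n := (!x.1, x.2)

/-- A linear word: a finite sequence of letters. -/
abbrev Word (n : ℕ) := List (Letter n)

/-- `W̄ = x̄ₘ ⋯ x̄₁ x̄₀` for `W = x₀x₁⋯xₘ`. -/
def Word.bar {n : ℕ} (W : Word n) : Word n := (W.map Letter.bar).reverse

/-- `Wᵏ`, the concatenation of `k` copies of `W`. -/
def wpow {n : ℕ} (W : Word n) (k : ℕ) : Word n := (List.replicate k W).flatten

/-- A linear word is freely reduced when consecutive letters are never inverse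
to each other. -/
def FreelyReduced {n : ℕ} (W : Word n) : Prop :=
  W.Chain' (fun a b => b ≠ Letter.bar a)

/-- A cyclic word: an equivalence class of linear words under cyclic rotation. -/
abbrev CWord (n : ℕ) := Cycle (Letter n)

/-- `c(W)`, the cyclic word represented by the linear word `W`. -/
def cyc {n : ℕ} (W : Word n) : CWord n := ↑W

/-- The length of a cyclic word. -/
def clen {n : ℕ} (𝒲 : CWord n) : ℕ := 𝒲.length

/-- A cyclic word is reduced if it is non-empty and all of its linear
representatives are freely reduced. -/
def CReduced {n : ℕ} (𝒲 : CWord n) : Prop :=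
  𝒲 ≠ Cycle.nil ∧ ∀ W : Word n, cyc W = 𝒲 → FreelyReduced W

/-- `P` is a (linear) subword of the cyclic word `𝒲`, i.e. a linear subword of
one of its linear representatives. -/
def Subword {n : ℕ} (P : Word n) (𝒲 : CWord n) : Prop :=
  ∃ W : Word n, cyc W = 𝒲 ∧ P <:+: W

/-- `P` is a subword of the power `𝒲ʲ`. -/
def SubwordPow {n : ℕ} (P : Word n) (𝒲 : CWord n) (j : ℕ) : Prop :=
  ∃ W : Word n, cyc W = 𝒲 ∧ P <:+: wpow W j

/-- A surface symbol: a reduced cyclic word in which every letter of `𝔸ₙ`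
appears exactly once. -/
def SurfaceSymbol {n : ℕ} (𝒪 : CWord n) : Prop :=
  CReduced 𝒪 ∧ ∃ O : Word n, cyc O = 𝒪 ∧ O.Nodup ∧ ∀ x : Letter n, x ∈ O

/-- `𝒲` is reduced and its (distinct) letters embed into `𝒪` preserving the
cyclic order. -/
def OrientPos {n : ℕ} (𝒪 𝒲 : CWord n) : Prop :=
  CReduced 𝒲 ∧ ∃ W O : Word n, cyc W = 𝒲 ∧ cyc O = 𝒪 ∧ W.Sublist O

/-- `𝒲` is reduced and its (distinct) letters embed into `𝒪` reversing the
cyclic order. -/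
def OrientNeg {n : ℕ} (𝒪 𝒲 : CWord n) : Prop :=
  CReduced 𝒲 ∧ ∃ W O : Word n, cyc W = 𝒲 ∧ cyc O = 𝒪 ∧ W.Sublist O.reverse

open Classical in
/-- The number `o(𝒲) ∈ {-1,0,1}` associated to a cyclic word `𝒲`. -/
noncomputable def o {n : ℕ} (𝒪 𝒲 : CWord n) : ℤ :=
  if OrientPos 𝒪 𝒲 then 1 else if OrientNeg 𝒪 𝒲 then -1 else 0

/-- Condition (1) of the definition of `𝒪`-linked pairs. -/
def LinkedType1 {n : ℕ} (𝒪 : CWord n) (P Q : Word n) : Prop :=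
  ∃ p₁ p₂ q₁ q₂ : Letter n, P = [p₁, p₂] ∧ Q = [q₁, q₂] ∧
    o 𝒪 (cyc [Letter.bar p₁, Letter.bar q₁, p₂, q₂]) ≠ 0

/-- Condition (2) of the definition of `𝒪`-linked pairs (`x₁`, `x₂` denote the
first and last letters of `Y`). -/
def LinkedType2 {n : ℕ} (𝒪 : CWord n) (P Q : Word n) : Prop :=
  ∃ (p₁ p₂ q₁ q₂ : Letter n) (Y : Word n), Y ≠ [] ∧
    P = p₁ :: Y ++ [p₂] ∧ Q = q₁ :: Y ++ [q₂] ∧ p₁ ≠ q₁ ∧ p₂ ≠ q₂ ∧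
    ∀ x₁ x₂ : Letter n, Y.head? = some x₁ → Y.getLast? = some x₂ →
      o 𝒪 (cyc [Letter.bar p₁, Letter.bar q₁, x₁]) = o 𝒪 (cyc [p₂, q₂, Letter.bar x₂])

/-- Condition (3) of the definition of `𝒪`-linked pairs. -/
def LinkedType3 {n : ℕ} (𝒪 : CWord n) (P Q : Word n) : Prop :=
  ∃ (p₁ p₂ q₁ q₂ : Letter n) (Y : Word n), Y ≠ [] ∧
    P = p₁ :: Y ++ [p₂] ∧ Q = q₁ :: Word.bar Y ++ [q₂] ∧
    p₁ ≠ Letter.bar q₂ ∧ p₂ ≠ Letter.bar q₁ ∧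
    ∀ x₁ x₂ : Letter n, Y.head? = some x₁ → Y.getLast? = some x₂ →
      o 𝒪 (cyc [q₂, Letter.bar p₁, x₁]) = o 𝒪 (cyc [Letter.bar q₁, p₂, Letter.bar x₂])

/-- The ordered pair `(P,Q)` is `𝒪`-linked. -/
def IsLinked {n : ℕ} (𝒪 : CWord n) (P Q : Word n) : Prop :=
  FreelyReduced P ∧ FreelyReduced Q ∧ 2 ≤ P.length ∧ 2 ≤ Q.length ∧
    (LinkedType1 𝒪 P Q ∨ LinkedType2 𝒪 P Q ∨ LinkedType3 𝒪 P Q)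

open Classical in
/-- The sign of a linked pair `(P,Q)`. -/
noncomputable def sign {n : ℕ} (𝒪 : CWord n) (P Q : Word n) : ℤ :=
  match P, Q with
  | p₁ :: ps, q₁ :: qs =>
    match ps.getLast?, qs.getLast?, ps.head? with
    | some p₂, some q₂, some x₁ =>
      if LinkedType1 𝒪 (p₁ :: ps) (q₁ :: qs) then
        o 𝒪 (cyc [Letter.bar p₁, Letter.bar q₁, p₂, q₂])
      else if LinkedType2 𝒪 (p₁ :: ps) (q₁ :: qs) then
        o 𝒪 (cyc [Letter.bar p₁, Letter.bar q₁, x₁])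
      else if LinkedType3 𝒪 (p₁ :: ps) (q₁ :: qs) then
        o 𝒪 (cyc [q₂, Letter.bar p₁, x₁])
      else 0
    | _, _, _ => 0
  | _, _ => 0

/-- `𝕃ℙ₁(𝒲)`: `(P,Q)` is an `𝒪`-linked pair of subwords of `𝒲`. -/
def LP1 {n : ℕ} (𝒪 𝒲 : CWord n) (P Q : Word n) : Prop :=
  IsLinked 𝒪 P Q ∧ Subword P 𝒲 ∧ Subword Q 𝒲

/-- `𝕃ℙ₂(𝒱,𝒲)`: `(P,Q)` is an `𝒪`-linked pair with `P` a subword of `𝒱ʲ`,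
`Q` a subword of `𝒲ᵏ` in the appropriate length windows. -/
def LP2 {n : ℕ} (𝒪 𝒱 𝒲 : CWord n) (P Q : Word n) : Prop :=
  IsLinked 𝒪 P Q ∧
    ∃ j k : ℕ, 0 < j ∧ 0 < k ∧ SubwordPow P 𝒱 j ∧ SubwordPow Q 𝒲 k ∧
      (j - 1) * clen 𝒱 < P.length ∧ P.length ≤ j * clen 𝒱 ∧
      (k - 1) * clen 𝒲 < Q.length ∧ Q.length ≤ k * clen 𝒲

/-- The cut data for `δ` when `(P,Q)` has type (1) or (2): two cuts of `𝒲`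
producing `W₁` (starting at the occurrence of `p₂`, the last letter of `P`) and
`W₂` (starting at the occurrence of `q₂`, the last letter of `Q`). -/
def DeltaPair12 {n : ℕ} (𝒪 𝒲 : CWord n) (P Q W₁ W₂ : Word n) : Prop :=
  (LinkedType1 𝒪 P Q ∨ LinkedType2 𝒪 P Q) ∧
  𝒲 = cyc (W₁ ++ W₂) ∧
  (∃ (P' : Word n) (p₂ : Letter n), P = P' ++ [p₂] ∧ W₁.head? = some p₂ ∧
      P' <:+ W₁ ++ W₂) ∧
  (∃ (Q' : Word n) (q₂ : Letter n), Q = Q' ++ [q₂] ∧ W₂.head? = some q₂ ∧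
      Q' <:+ W₂ ++ W₁)

/-- The cut data for `δ` when `(P,Q)` has type (3): `W₁` runs from `p₂` to
`q₁`, and `W₂` from `q₂` to `p₁`. -/
def DeltaPair3 {n : ℕ} (𝒪 𝒲 : CWord n) (P Q W₁ W₂ : Word n) : Prop :=
  LinkedType3 𝒪 P Q ∧
  ∃ (p₁ p₂ q₁ q₂ : Letter n) (Y Y' : Word n), Y ≠ [] ∧ Y' ≠ [] ∧
    P = p₁ :: Y ++ [p₂] ∧ Q = q₁ :: Y' ++ [q₂] ∧
    W₁.head? = some p₂ ∧ W₁.getLast? = some q₁ ∧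
    W₂.head? = some q₂ ∧ W₂.getLast? = some p₁ ∧
    𝒲 = cyc (W₁ ++ Y' ++ W₂ ++ Y)

/-- The words `W₁`, `W₂` obtained by cutting `𝒲` along the linked pair `(P,Q)`. -/
def DeltaPair {n : ℕ} (𝒪 𝒲 : CWord n) (P Q W₁ W₂ : Word n) : Prop :=
  DeltaPair12 𝒪 𝒲 P Q W₁ W₂ ∨ DeltaPair3 𝒪 𝒲 P Q W₁ W₂

open Classical in
/-- A choice of the pair of linear words obtained by cutting `𝒲` along `(P,Q)`. -/
noncomputable def deltaW {n : ℕ} (𝒪 𝒲 : CWord n) (P Q : Word n) : Word n × Word n :=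
  if h : ∃ W : Word n × Word n, DeltaPair 𝒪 𝒲 P Q W.1 W.2 then h.choose else ([], [])

/-- The cyclic word `δ₁(P,Q)`. -/
noncomputable def delta1 {n : ℕ} (𝒪 𝒲 : CWord n) (P Q : Word n) : CWord n :=
  cyc (deltaW 𝒪 𝒲 P Q).1

/-- The cyclic word `δ₂(P,Q)`. -/
noncomputable def delta2 {n : ℕ} (𝒪 𝒲 : CWord n) (P Q : Word n) : CWord n :=
  cyc (deltaW 𝒪 𝒲 P Q).2

/-- `W₁` is the linear representative of `↑W₁` obtained by cutting immediately
before (the occurrence of) the last letter of `P`: `P` occurs (in a power)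
ending exactly at the cut. -/
def CutEnds {n : ℕ} (W₁ P : Word n) : Prop :=
  ∃ (P' : Word n) (p₂ : Letter n) (j : ℕ),
    P = P' ++ [p₂] ∧ W₁.head? = some p₂ ∧ P' <:+ wpow W₁ j

/-- The data for `γ(P,Q)` when `(P,Q) ∈ 𝕃ℙ₂(𝒱,𝒲)` has type (1) or (2):
`γ(P,Q) = c(V₁W₁)` where `V₁`, `W₁` are the representatives of `𝒱`, `𝒲` obtained
by cutting immediately before `p₂`, resp. `q₂`. -/
def GammaPair12 {n : ℕ} (𝒪 𝒱 𝒲 : CWord n) (P Q : Word n) (G : CWord n) : Prop :=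
  (LinkedType1 𝒪 P Q ∨ LinkedType2 𝒪 P Q) ∧
  ∃ V₁ W₁ : Word n, cyc V₁ = 𝒱 ∧ cyc W₁ = 𝒲 ∧ CutEnds V₁ P ∧ CutEnds W₁ Q ∧
    G = cyc (V₁ ++ W₁)

/-- The data for `γ(P,Q)` when `(P,Q) ∈ 𝕃ℙ₂(𝒱,𝒲)` has type (3):
`V₁` is the subword of `𝒱` starting right after the end of `Y` and ending right
before the first letter of `Y` (whose footprint in `𝒱` is the arc `U`), and
similarly `W₁` for `Ȳ` in `𝒲`; then `γ(P,Q) = c(V₁W₁)`. -/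
def GammaPair3 {n : ℕ} (𝒪 𝒱 𝒲 : CWord n) (P Q : Word n) (G : CWord n) : Prop :=
  LinkedType3 𝒪 P Q ∧
  ∃ (p₁ p₂ q₁ q₂ : Letter n) (Y V₁ W₁ U U' : Word n) (j k : ℕ),
    P = p₁ :: Y ++ [p₂] ∧ Q = q₁ :: Word.bar Y ++ [q₂] ∧
    V₁.head? = some p₂ ∧ V₁.getLast? = some p₁ ∧
    W₁.head? = some q₂ ∧ W₁.getLast? = some q₁ ∧
    𝒱 = cyc (U ++ V₁) ∧ Y <+: wpow (U ++ V₁) j ∧ Y.length % clen 𝒱 = U.length ∧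
    𝒲 = cyc (U' ++ W₁) ∧ Word.bar Y <+: wpow (U' ++ W₁) k ∧
      (Word.bar Y).length % clen 𝒲 = U'.length ∧
    G = cyc (V₁ ++ W₁)

/-- `G` is the cyclic word `γ(P,Q)` associated to `(P,Q) ∈ 𝕃ℙ₂(𝒱,𝒲)`. -/
def GammaPair {n : ℕ} (𝒪 𝒱 𝒲 : CWord n) (P Q : Word n) (G : CWord n) : Prop :=
  GammaPair12 𝒪 𝒱 𝒲 P Q G ∨ GammaPair3 𝒪 𝒱 𝒲 P Q G

open Classical in
/-- A choice of the cyclic word `γ(P,Q)` for `(P,Q) ∈ 𝕃ℙ₂(𝒱,𝒲)`. -/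
noncomputable def gamma {n : ℕ} (𝒪 𝒱 𝒲 : CWord n) (P Q : Word n) : CWord n :=
  if h : ∃ G : CWord n, GammaPair 𝒪 𝒱 𝒲 P Q G then h.choose else Cycle.nil

/-- The set of non-empty reduced cyclic words, the basis of `𝕍`. -/
def RedCyc (n : ℕ) := {𝒲 : CWord n // CReduced 𝒲}

instance {n : ℕ} [NeZero n] : Inhabited (RedCyc n) :=
  ⟨⟨cyc [default], by
    constructor
    · intro h
      have h' : ([(default : Letter n)] : Word n) = [] := (Cycle.coe_eq_nil _).mp h
      simp at h'
    · intro W hW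
      have h1 : W ~r [(default : Letter n)] := Cycle.coe_eq_coe.mp hW
      have h2 : W = [(default : Letter n)] := List.perm_singleton.mp h1.perm
      rw [h2]
      exact List.isChain_singleton _⟩⟩

open Classical in
/-- View a cyclic word as a basis element of `𝕍` (junk value if not reduced). -/
noncomputable def toRed {n : ℕ} [NeZero n] (c : CWord n) : RedCyc n :=
  if h : CReduced c then ⟨c, h⟩ else default



/-! ### Auxiliary lemmas -/

section Aux

variable {n : ℕ}

lemma Letter.bar_bar' (x : Letter n) : Letter.bar (Letter.bar x) = x := by
  simp [Letter.bar]

lemma Letter.bar_ne' (x : Letter n) : Letter.bar x ≠ x := by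
  simp [Letter.bar, Prod.ext_iff]

lemma bar_length (Y : Word n) : (Word.bar Y).length = Y.length := by
  simp [Word.bar]

lemma bar_getElem? (Y : Word n) (t : ℕ) (ht : t < Y.length) :
    (Word.bar Y)[t]? = some (Letter.bar (Y[Y.length - 1 - t]'(by omega))) := by
  unfold Word.bar
  rw [List.getElem?_reverse (by simpa using ht), List.getElem?_map,
    List.getElem?_eq_getElem (by simpa using Nat.sub_one_sub_lt_of_lt ht)]
  simp

lemma cyc_eq_cyc_iff {U V : Word n} : cyc U = cyc V ↔ U ~r V := by
  unfold cyc
  exact Cycle.coe_eq_coe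

lemma cyc_append_comm (A B' : Word n) : cyc (A ++ B') = cyc (B' ++ A) := by
  unfold cyc
  rw [Cycle.coe_eq_coe]
  exact List.isRotated_append

lemma head?_append_left {l l' : List (Letter n)} (h : l ≠ []) :
    (l ++ l').head? = l.head? := List.head?_append_of_ne_nil _ h

lemma getLast?_of_suffix {l₁ l₂ : List (Letter n)} (h : l₁ <:+ l₂) (hne : l₁ ≠ []) :
    l₂.getLast? = l₁.getLast? := by
  obtain ⟨t, rfl⟩ := h
  exact List.getLast?_append_of_ne_nil _ hne

lemma suffix_eq_of_length {l₁ l₂ l : List (Letter n)} (h₁ : l₁ <:+ l) (h₂ : l₂ <:+ l)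
    (hl : l₁.length = l₂.length) : l₁ = l₂ := by
  obtain ⟨t₁, rfl⟩ := h₁
  obtain ⟨t₂, h⟩ := h₂
  have hlen : t₂.length = t₁.length := by
    have := congrArg List.length h
    simp only [List.length_append] at this
    omega
  exact ((List.append_inj' h (by omega)).2).symm

lemma mid_eq {p₁ p₁' p₂ p₂' : Letter n} {Y Y' : Word n}
    (h : p₁ :: Y ++ [p₂] = p₁' :: Y' ++ [p₂']) : p₁ = p₁' ∧ Y = Y' ∧ p₂ = p₂' := by
  have hlen : (p₁ :: Y).length = (p₁' :: Y').length := by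
    have := congrArg List.length h
    simp only [List.length_append, List.length_cons, List.length_nil] at this
    simp only [List.length_cons]
    omega
  obtain ⟨hc, hp⟩ := List.append_inj h hlen
  obtain ⟨h1, hY⟩ := List.cons_eq_cons.mp hc
  exact ⟨h1, hY, by simpa using hp⟩

lemma core_contra (Y : Word n) (hred : FreelyReduced Y) (c : ℕ)
    (hc : c + 2 ≤ 2 * Y.length)
    (rel : ∀ t s : ℕ, (ht : t < Y.length) → (hs : s < Y.length) → t + s = c →
      Y[t]'ht = Letter.bar (Y[s]'hs)) : False := by
  rcases Nat.even_or_odd c with ⟨t, hct⟩ | ⟨t, hct⟩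
  · have ht : t < Y.length := by omega
    have h := rel t t ht ht (by omega)
    exact Letter.bar_ne' _ h.symm
  · have ht : t + 1 < Y.length := by omega
    have h1 := rel t (t + 1) (by omega) ht (by omega)
    have h2 := List.isChain_iff_getElem.mp hred t (by omega)
    exact h2 (by rw [h1, Letter.bar_bar'])

lemma bar_ne_self (Y : Word n) (hred : FreelyReduced Y) (hne : Y ≠ []) :
    Word.bar Y ≠ Y := by
  intro h
  have hm : 1 ≤ Y.length := List.length_pos_iff.mpr hne
  apply core_contra Y hred (Y.length - 1) (by omega)
  intro t s ht hs hts
  have h1 : (Word.bar Y)[t]? = Y[t]? := by rw [h]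
  rw [bar_getElem? Y t ht, List.getElem?_eq_getElem ht] at h1
  have h2 := (Option.some_inj.mp h1).symm
  have hidx : Y.length - 1 - t = s := by omega
  simp only [hidx] at h2
  exact h2

lemma o_eq_zero_of_not_nodup {𝒪 : CWord n} (h𝒪 : SurfaceSymbol 𝒪) (l : Word n)
    (hl : ¬ l.Nodup) : o 𝒪 (cyc l) = 0 := by
  obtain ⟨-, O₀, hO₀, hnd, -⟩ := h𝒪
  have hOnd : ∀ O : Word n, cyc O = 𝒪 → O.Nodup := by
    intro O hO
    have : O ~r O₀ := cyc_eq_cyc_iff.mp (hO.trans hO₀.symm)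
    exact this.perm.nodup_iff.mpr hnd
  have hWnd : ∀ W : Word n, cyc W = cyc l → ¬ W.Nodup := by
    intro W hW hn
    have : W ~r l := cyc_eq_cyc_iff.mp hW
    exact hl (this.perm.nodup_iff.mp hn)
  unfold o
  rw [if_neg, if_neg]
  · rintro ⟨-, W, O, hWc, hOc, hsub⟩
    exact hWnd W hWc (hsub.nodup ((List.nodup_reverse).mpr (hOnd O hOc)))
  · rintro ⟨-, W, O, hWc, hOc, hsub⟩
    exact hWnd W hWc (hsub.nodup (hOnd O hOc))

lemma exists_cut {𝒲 : CWord n} (P' : Word n) (p₂ : Letter n)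
    (h : Subword (P' ++ [p₂]) 𝒲) :
    ∃ U : Word n, cyc U = 𝒲 ∧ U.head? = some p₂ ∧ P' <:+ U := by
  obtain ⟨W, hWc, A, B₀, hW⟩ := h
  refine ⟨[p₂] ++ B₀ ++ A ++ P', ?_, by simp, ⟨[p₂] ++ B₀ ++ A, by simp⟩⟩
  rw [← hWc, ← hW]
  have h1 : [p₂] ++ B₀ ++ A ++ P' = ([p₂] ++ B₀) ++ (A ++ P') := by simp
  rw [h1, cyc_append_comm]
  congr 1
  simp

lemma exists_cut3 {𝒲 : CWord n} (Y : Word n) (p₁ p₂ : Letter n)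
    (h : Subword (p₁ :: Y ++ [p₂]) 𝒲) :
    ∃ B : Word n, cyc ([p₂] ++ B ++ [p₁] ++ Y) = 𝒲 := by
  obtain ⟨W, hWc, A, B₀, hW⟩ := h
  refine ⟨B₀ ++ A, ?_⟩
  rw [← hWc, ← hW]
  have h1 : [p₂] ++ (B₀ ++ A) ++ [p₁] ++ Y = ([p₂] ++ B₀) ++ (A ++ ([p₁] ++ Y)) := by simp
  rw [h1, cyc_append_comm]
  congr 1
  simp

lemma split_of_two_cuts (U V : Word n) (hUV : cyc U = cyc V) (hne : V ≠ U)
    (hU : U ≠ []) :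
    ∃ W₁ W₂ : Word n, W₁ ≠ [] ∧ W₂ ≠ [] ∧ W₁ ++ W₂ = U ∧ W₂ ++ W₁ = V := by
  obtain ⟨k, hk⟩ := cyc_eq_cyc_iff.mp hUV
  have hL : 0 < U.length := List.length_pos_iff.mpr hU
  have hrot : U.rotate (k % U.length) = V := by rw [List.rotate_mod]; exact hk
  have hk0 : k % U.length ≠ 0 := by
    intro h0
    exact hne (by rw [← hrot, h0, List.rotate_zero])
  have hkL : k % U.length < U.length := Nat.mod_lt _ hL
  refine ⟨U.take (k % U.length), U.drop (k % U.length), ?_, ?_,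
    List.take_append_drop _ _, ?_⟩
  · apply List.ne_nil_of_length_pos
    rw [List.length_take]
    omega
  · apply List.ne_nil_of_length_pos
    rw [List.length_drop]
    omega
  · rw [← List.rotate_eq_drop_append_take (le_of_lt hkL)]
    exact hrot

lemma delta12_of_cuts {𝒪 𝒲 : CWord n} {P Q : Word n} (P' Q' : Word n) (p₂ q₂ : Letter n)
    (U V : Word n)
    (hT : LinkedType1 𝒪 P Q ∨ LinkedType2 𝒪 P Q)
    (hP : P = P' ++ [p₂]) (hQ : Q = Q' ++ [q₂])
    (hUc : cyc U = 𝒲) (hVc : cyc V = 𝒲)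
    (hUh : U.head? = some p₂) (hVh : V.head? = some q₂)
    (hPs : P' <:+ U) (hQs : Q' <:+ V) (hne : V ≠ U) (hUne : U ≠ []) :
    ∃ W₁ W₂ : Word n, DeltaPair 𝒪 𝒲 P Q W₁ W₂ := by
  obtain ⟨W₁, W₂, h1ne, h2ne, h12, h21⟩ :=
    split_of_two_cuts U V (hUc.trans hVc.symm) hne hUne
  refine ⟨W₁, W₂, Or.inl ⟨hT, by rw [h12]; exact hUc.symm,
    ⟨P', p₂, hP, ?_, by rw [h12]; exact hPs⟩,
    ⟨Q', q₂, hQ, ?_, by rw [h21]; exact hQs⟩⟩⟩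
  · rw [← hUh, ← h12, head?_append_left h1ne]
  · rw [← hVh, ← h21, head?_append_left h2ne]

lemma pat_getElem?₀ (x y : Letter n) (M Z : Word n) :
    ([x] ++ M ++ [y] ++ Z)[0]? = some x := by simp

lemma pat_getElem?₁ (x y : Letter n) (M Z : Word n) :
    ([x] ++ M ++ [y] ++ Z)[M.length + 1]? = some y := by
  rw [List.getElem?_append_left (by simp)]
  rw [List.getElem?_append_right (by simp)]
  have h1 : M.length + 1 - ([x] ++ M).length = 0 := by simp
  rw [h1]
  rfl

lemma pat_getElem?₂ (x y : Letter n) (M Z : Word n) (t : ℕ) :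
    ([x] ++ M ++ [y] ++ Z)[M.length + 2 + t]? = Z[t]? := by
  rw [List.getElem?_append_right
    (by simp only [List.length_append, List.length_cons, List.length_nil]; omega)]
  have h1 : M.length + 2 + t - ([x] ++ M ++ [y]).length = t := by
    simp only [List.length_append, List.length_cons, List.length_nil]
    omega
  rw [h1]

lemma t1_t3_exclusive {𝒪 : CWord n} {P Q : Word n}
    (h1 : LinkedType1 𝒪 P Q) (h3 : LinkedType3 𝒪 P Q) : False := by
  obtain ⟨p₁, p₂, q₁, q₂, hP, -, -⟩ := h1
  obtain ⟨p₁', p₂', q₁', q₂', Y', hY'ne, hP', -, -⟩ := h3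
  have hlen := congrArg List.length (hP.symm.trans hP')
  have hY' : 0 < Y'.length := List.length_pos_iff.mpr hY'ne
  simp only [List.length_append, List.length_cons, List.length_nil] at hlen
  omega

lemma t2_t3_exclusive {𝒪 : CWord n} {P Q : Word n} (hPred : FreelyReduced P)
    (h2 : LinkedType2 𝒪 P Q) (h3 : LinkedType3 𝒪 P Q) : False := by
  obtain ⟨p₁, p₂, q₁, q₂, Y, hYne, hP, hQ, -, -, -⟩ := h2
  obtain ⟨p₁', p₂', q₁', q₂', Y', hY'ne, hP', hQ', -, -, -⟩ := h3
  obtain ⟨-, hYY, -⟩ := mid_eq (hP.symm.trans hP')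
  obtain ⟨-, hYbar, -⟩ := mid_eq (hQ.symm.trans hQ')
  subst hYY
  have hredY : FreelyReduced Y := by
    rw [hP] at hPred
    exact hPred.infix ⟨[p₁], [p₂], by simp⟩
  exact bar_ne_self Y hredY hYne hYbar.symm

lemma engine (Y B C : Word n) (p₁ p₂ q₁ q₂ : Letter n) (k : ℕ)
    (hYne : Y ≠ []) (hred : FreelyReduced Y)
    (hk : k < ([p₂] ++ B ++ [p₁] ++ Y).length)
    (hrot : ([p₂] ++ B ++ [p₁] ++ Y).rotate k = [q₂] ++ C ++ [q₁] ++ Word.bar Y)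
    (h1 : p₁ ≠ Letter.bar q₂) (h2 : p₂ ≠ Letter.bar q₁) :
    ∃ W₁ W₂ : Word n, W₁.head? = some p₂ ∧ W₁.getLast? = some q₁ ∧
      W₂.head? = some q₂ ∧ W₂.getLast? = some p₁ ∧
      [p₂] ++ B ++ [p₁] ++ Y = W₁ ++ (Word.bar Y ++ (W₂ ++ Y)) := by
  set m := Y.length with hm'
  set b := B.length with hb'
  have hm : 0 < m := List.length_pos_iff.mpr hYne
  set U := [p₂] ++ B ++ [p₁] ++ Y with hU
  set V := [q₂] ++ C ++ [q₁] ++ Word.bar Y with hV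
  have hLU : U.length = b + m + 2 := by
    rw [hU]; simp only [List.length_append, List.length_cons, List.length_nil]; omega
  have hLV : V.length = U.length := by rw [← hrot, List.length_rotate]
  have hC : C.length = b := by
    have h3 : V.length = C.length + m + 2 := by
      rw [hV]
      simp only [List.length_append, List.length_cons, List.length_nil, bar_length]
      omega
    omega
  have key : ∀ j, j < U.length → V[j]? = U[(j + k) % U.length]? := by
    intro j hj
    rw [← hrot, List.getElem?_rotate hj]
  -- structural facts
  have sU0 : U[0]? = some p₂ := pat_getElem?₀ p₂ p₁ B Y
  have sUp1 : U[b + 1]? = some p₁ := pat_getElem?₁ p₂ p₁ B Y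
  have sUY : ∀ t, U[b + 2 + t]? = Y[t]? := fun t => pat_getElem?₂ p₂ p₁ B Y t
  have sV0 : V[0]? = some q₂ := pat_getElem?₀ q₂ q₁ C (Word.bar Y)
  have sVq1 : V[b + 1]? = some q₁ := by
    have := pat_getElem?₁ q₂ q₁ C (Word.bar Y)
    rwa [hC] at this
  have sVbar : ∀ t, V[b + 2 + t]? = (Word.bar Y)[t]? := by
    intro t
    have := pat_getElem?₂ q₂ q₁ C (Word.bar Y) t
    rwa [hC] at this
  -- position facts transferred through the rotation
  have zF1 : U[k % U.length]? = some q₂ := by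
    have h3 := key 0 (by omega)
    rw [sV0] at h3
    simpa using h3.symm
  have zF2 : U[(b + 1 + k) % U.length]? = some q₁ := by
    have h3 := key (b + 1) (by omega)
    rw [sVq1] at h3
    exact h3.symm
  have zF3 : ∀ t, t < m →
      U[(b + 2 + t + k) % U.length]? = some (Letter.bar (Y[m - 1 - t]'(by omega))) := by
    intro t ht
    have h3 := key (b + 2 + t) (by omega)
    rw [sVbar t, bar_getElem? Y t ht] at h3
    exact h3.symm
  -- Step 1 : m + 1 ≤ k ∧ k ≤ b + 1
  have hk1 : m + 1 ≤ k := by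
    by_contra hlt
    push_neg at hlt
    rcases Nat.lt_or_ge k m with hkm | hkm
    · -- k < m : anti-palindromic overlap inside Y
      apply core_contra Y hred (k + m - 1) (by omega)
      intro t s ht hs hts
      have hidx : (b + 2 + (m - 1 - s) + k) % U.length = b + 2 + t := by
        have : b + 2 + (m - 1 - s) + k = b + 2 + t := by omega
        rw [this, Nat.mod_eq_of_lt (by omega)]
      have e2 := zF3 (m - 1 - s) (by omega)
      rw [hidx] at e2
      have e1 : U[b + 2 + t]? = some (Y[t]'ht) := by
        rw [sUY t, List.getElem?_eq_getElem ht]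
      rw [e1] at e2
      have e3 := Option.some_inj.mp e2
      have hs2 : m - 1 - (m - 1 - s) = s := by omega
      simp only [hs2] at e3
      exact e3
    · -- k = m : p₂ = bar q₁
      have hkm' : k = m := by omega
      subst hkm'
      exfalso
      apply h2
      have e1 := zF3 0 (by omega)
      have hidx : (b + 2 + 0 + m) % U.length = 0 := by
        have : b + 2 + 0 + m = U.length := by omega
        rw [this, Nat.mod_self]
      rw [hidx, sU0] at e1
      have e2 := zF2
      have hidx2 : (b + 1 + m) % U.length = b + 2 + (m - 1) := by
        rw [Nat.mod_eq_of_lt (by omega)]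
        omega
      rw [hidx2, sUY (m - 1), List.getElem?_eq_getElem (by omega)] at e2
      have e3 := Option.some_inj.mp e2
      have e4 := Option.some_inj.mp e1
      simp only [Nat.sub_zero] at e4
      rw [e4, e3]
  have hk2 : k ≤ b + 1 := by
    by_contra hgt
    push_neg at hgt
    rcases Nat.lt_or_ge (b + 2) k with hh | hh
    · -- b + 3 ≤ k : overlap inside Y again
      apply core_contra Y hred (k - b - 3) (by omega)
      intro t s ht hs hts
      have hidx : (b + 2 + (m - 1 - s) + k) % U.length = b + 2 + t := by
        have h4 : b + 2 + (m - 1 - s) + k = U.length + (b + 2 + t) := by omega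
        rw [h4, Nat.add_mod_left, Nat.mod_eq_of_lt (by omega)]
      have e2 := zF3 (m - 1 - s) (by omega)
      rw [hidx] at e2
      have e1 : U[b + 2 + t]? = some (Y[t]'ht) := by
        rw [sUY t, List.getElem?_eq_getElem ht]
      rw [e1] at e2
      have e3 := Option.some_inj.mp e2
      have hs2 : m - 1 - (m - 1 - s) = s := by omega
      simp only [hs2] at e3
      exact e3
    · -- k = b + 2 : p₁ = bar q₂
      have hk' : k = b + 2 := by omega
      subst hk'
      exfalso
      apply h1
      have e1 := zF3 (m - 1) (by omega)
      have hidx : (b + 2 + (m - 1) + (b + 2)) % U.length = b + 1 := by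
        have h4 : b + 2 + (m - 1) + (b + 2) = U.length + (b + 1) := by omega
        rw [h4, Nat.add_mod_left, Nat.mod_eq_of_lt (by omega)]
      rw [hidx, sUp1] at e1
      have e2 := zF1
      have hidx2 : (b + 2) % U.length = b + 2 + 0 := by
        rw [Nat.mod_eq_of_lt (by omega)]
      rw [hidx2, sUY 0, List.getElem?_eq_getElem (by omega)] at e2
      have e3 := Option.some_inj.mp e2
      have e4 := Option.some_inj.mp e1
      simp only [Nat.sub_self] at e4
      rw [e4, e3]
  -- clean position facts
  have gF1 : U[k]? = some q₂ := by
    rwa [Nat.mod_eq_of_lt (by omega)] at zF1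
  have gF2 : U[k - m - 1]? = some q₁ := by
    have h4 : (b + 1 + k) % U.length = k - m - 1 := by
      have h5 : b + 1 + k = U.length + (k - m - 1) := by omega
      rw [h5, Nat.add_mod_left, Nat.mod_eq_of_lt (by omega)]
    rwa [h4] at zF2
  have gF3 : ∀ t, t < m →
      U[k - m + t]? = some (Letter.bar (Y[m - 1 - t]'(by omega))) := by
    intro t ht
    have h4 : (b + 2 + t + k) % U.length = k - m + t := by
      have h5 : b + 2 + t + k = U.length + (k - m + t) := by omega
      rw [h5, Nat.add_mod_left, Nat.mod_eq_of_lt (by omega)]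
    have := zF3 t ht
    rwa [h4] at this
  -- construction of W₁ and W₂
  refine ⟨U.take (k - m), (U.drop k).take (b + 2 - k), ?_, ?_, ?_, ?_, ?_⟩
  · rw [List.head?_eq_getElem?, List.getElem?_take_of_lt (by omega)]
    exact sU0
  · rw [List.getLast?_eq_getElem?]
    have hlen : (U.take (k - m)).length = k - m := by
      rw [List.length_take]; omega
    rw [hlen, List.getElem?_take_of_lt (by omega)]
    have h4 : k - m - 1 = k - m - 1 := rfl
    exact gF2
  · rw [List.head?_eq_getElem?, List.getElem?_take_of_lt (by omega), List.getElem?_drop]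
    simpa using gF1
  · rw [List.getLast?_eq_getElem?]
    have hlen : ((U.drop k).take (b + 2 - k)).length = b + 2 - k := by
      rw [List.length_take, List.length_drop]; omega
    rw [hlen, List.getElem?_take_of_lt (by omega), List.getElem?_drop]
    have h4 : k + (b + 2 - k - 1) = b + 1 := by omega
    rw [h4]
    exact sUp1
  · -- the decomposition of U
    have hdropY : U.drop (b + 2) = Y := by
      rw [hU]
      exact List.drop_left' (by simp [hb'])
    have hbarYpart : (U.drop (k - m)).take m = Word.bar Y := by
      apply List.ext_getElem?
      intro i
      by_cases hi : i < m
      · rw [List.getElem?_take_of_lt hi, List.getElem?_drop]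
        rw [bar_getElem? Y i hi]
        have h4 : k - m + i = k - m + i := rfl
        exact gF3 i hi
      · rw [List.getElem?_eq_none, List.getElem?_eq_none]
        · rw [bar_length]; omega
        · rw [List.length_take, List.length_drop]; omega
    conv_lhs => rw [← List.take_append_drop (k - m) U]
    congr 1
    conv_lhs => rw [← List.take_append_drop m (U.drop (k - m))]
    rw [hbarYpart]
    congr 1
    rw [List.drop_drop]
    have h4 : k - m + m = k := by omega
    rw [h4]
    conv_lhs => rw [← List.take_append_drop (b + 2 - k) (U.drop k)]
    congr 1
    rw [List.drop_drop]
    have h5 : k + (b + 2 - k) = b + 2 := by omega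
    rw [h5]
    exact hdropY

end Aux

/-- For `(P,Q) ∈ 𝕃ℙ₁(𝒲)` the words `W₁`, `W₂` of the definition
of `δ₁`, `δ₂` exist, are disjoint occurrences and are non-empty; moreover
`𝒲 = c(W₁W₂)` for types (1),(2) and `𝒲 = c(YW₁ȲW₂)` for type (3). -/
theorem delta_words_nonempty_and_decomposition (n : ℕ) (𝒪 : CWord n)
    (h𝒪 : SurfaceSymbol 𝒪) (𝒲 : CWord n) (hW : CReduced 𝒲)
    (P Q : Word n) (h : LP1 𝒪 𝒲 P Q) :
    (∃ W₁ W₂ : Word n, DeltaPair 𝒪 𝒲 P Q W₁ W₂) ∧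
    ∀ W₁ W₂ : Word n, DeltaPair 𝒪 𝒲 P Q W₁ W₂ →
      W₁ ≠ [] ∧ W₂ ≠ [] ∧
      ((LinkedType1 𝒪 P Q ∨ LinkedType2 𝒪 P Q) → 𝒲 = cyc (W₁ ++ W₂)) ∧
      (LinkedType3 𝒪 P Q →
        ∃ Y : Word n, 𝒲 = cyc (Y ++ W₁ ++ Word.bar Y ++ W₂)) := by
  obtain ⟨⟨hPred, hQred, hPlen, hQlen, htypes⟩, hPsub, hQsub⟩ := h
  constructor
  · -- existence of a cut pair
    rcases htypes with h1 | h2 | h3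
    · -- type 1
      obtain ⟨p₁, p₂, q₁, q₂, hP, hQ, ho⟩ := h1
      have hP' : P = [p₁] ++ [p₂] := by simpa using hP
      have hQ' : Q = [q₁] ++ [q₂] := by simpa using hQ
      obtain ⟨U, hUc, hUh, hUs⟩ := exists_cut [p₁] p₂ (hP' ▸ hPsub)
      obtain ⟨V, hVc, hVh, hVs⟩ := exists_cut [q₁] q₂ (hQ' ▸ hQsub)
      have hUne : U ≠ [] := by
        intro h0; rw [h0] at hUh; simp at hUh
      have hne : V ≠ U := by
        intro heq
        have hU1 : U.getLast? = some p₁ := by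
          rw [getLast?_of_suffix hUs (by simp)]; rfl
        have hV1 : U.getLast? = some q₁ := by
          rw [← heq, getLast?_of_suffix hVs (by simp)]; rfl
        have hpq : p₁ = q₁ := by
          rw [hU1] at hV1; exact Option.some_inj.mp hV1
        apply ho
        rw [← hpq]
        exact o_eq_zero_of_not_nodup h𝒪 _ (by simp)
      exact delta12_of_cuts [p₁] [q₁] p₂ q₂ U V (Or.inl ⟨p₁, p₂, q₁, q₂, hP, hQ, ho⟩)
        hP' hQ' hUc hVc hUh hVh hUs hVs hne hUne
    · -- type 2
      obtain ⟨p₁, p₂, q₁, q₂, Y, hYne, hP, hQ, hp1, hp2, ho⟩ := h2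
      obtain ⟨U, hUc, hUh, hUs⟩ := exists_cut (p₁ :: Y) p₂ (hP ▸ hPsub)
      obtain ⟨V, hVc, hVh, hVs⟩ := exists_cut (q₁ :: Y) q₂ (hQ ▸ hQsub)
      have hUne : U ≠ [] := by
        intro h0; rw [h0] at hUh; simp at hUh
      have hne : V ≠ U := by
        intro heq
        have hee := suffix_eq_of_length hUs (heq ▸ hVs) (by simp)
        exact hp1 (List.cons_eq_cons.mp hee).1
      exact delta12_of_cuts (p₁ :: Y) (q₁ :: Y) p₂ q₂ U V
        (Or.inr ⟨p₁, p₂, q₁, q₂, Y, hYne, hP, hQ, hp1, hp2, ho⟩)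
        hP hQ hUc hVc hUh hVh hUs hVs hne hUne
    · -- type 3
      obtain ⟨p₁, p₂, q₁, q₂, Y, hYne, hP, hQ, hpq2, hpq1, ho⟩ := h3
      obtain ⟨B, hUc⟩ := exists_cut3 Y p₁ p₂ (hP ▸ hPsub)
      obtain ⟨C, hVc⟩ := exists_cut3 (Word.bar Y) q₁ q₂ (hQ ▸ hQsub)
      obtain ⟨k0, hk0⟩ := cyc_eq_cyc_iff.mp (hUc.trans hVc.symm)
      have hLpos : 0 < ([p₂] ++ B ++ [p₁] ++ Y).length := by simp
      have hrot : ([p₂] ++ B ++ [p₁] ++ Y).rotate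
          (k0 % ([p₂] ++ B ++ [p₁] ++ Y).length) = [q₂] ++ C ++ [q₁] ++ Word.bar Y := by
        rw [List.rotate_mod]; exact hk0
      have hredY : FreelyReduced Y :=
        (hP ▸ hPred).infix ⟨[p₁], [p₂], by simp⟩
      obtain ⟨W₁, W₂, w1h, w1l, w2h, w2l, hdec⟩ :=
        engine Y B C p₁ p₂ q₁ q₂ (k0 % ([p₂] ++ B ++ [p₁] ++ Y).length) hYne hredY
          (Nat.mod_lt _ hLpos) hrot hpq2 hpq1
      have hbarne : Word.bar Y ≠ [] := by
        intro h0
        apply hYne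
        have := congrArg List.length h0
        rw [bar_length] at this
        exact List.length_eq_zero_iff.mp this
      refine ⟨W₁, W₂, Or.inr ⟨⟨p₁, p₂, q₁, q₂, Y, hYne, hP, hQ, hpq2, hpq1, ho⟩,
        p₁, p₂, q₁, q₂, Y, Word.bar Y, hYne, hbarne, hP, hQ, w1h, w1l, w2h, w2l, ?_⟩⟩
      rw [← hUc, hdec]
      have e1 : W₁ ++ (Word.bar Y ++ (W₂ ++ Y)) = W₁ ++ Word.bar Y ++ W₂ ++ Y := by
        simp [List.append_assoc]
      rw [e1]
  · -- properties of any cut pair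
    rintro W₁ W₂ (⟨hT, hcyc, ⟨P', p₂, hPeq, hW1h, hPs⟩, ⟨Q', q₂, hQeq, hW2h, hQs⟩⟩ |
      ⟨hT3, p₁, p₂, q₁, q₂, Yd, Y', hYdne, hY'ne, hPeq, hQeq, w1h, w1l, w2h, w2l, hcyc⟩)
    · refine ⟨?_, ?_, fun _ => hcyc, ?_⟩
      · intro h0; rw [h0] at hW1h; simp at hW1h
      · intro h0; rw [h0] at hW2h; simp at hW2h
      · intro hT3
        exfalso
        rcases hT with h1 | h2
        · exact t1_t3_exclusive h1 hT3
        · exact t2_t3_exclusive hPred h2 hT3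
    · refine ⟨?_, ?_, ?_, ?_⟩
      · intro h0; rw [h0] at w1h; simp at w1h
      · intro h0; rw [h0] at w2h; simp at w2h
      · intro h12
        exfalso
        rcases h12 with h1 | h2
        · exact t1_t3_exclusive h1 hT3
        · exact t2_t3_exclusive hPred h2 hT3
      · intro _
        obtain ⟨p₁', p₂', q₁', q₂', Y'', hY''ne, hP'', hQ'', -, -, -⟩ := hT3
        obtain ⟨-, hYY, -⟩ := mid_eq (hPeq.symm.trans hP'')
        obtain ⟨-, hY', -⟩ := mid_eq (hQeq.symm.trans hQ'')
        refine ⟨Yd, ?_⟩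
        rw [hcyc]
        have hbar : Y' = Word.bar Yd := by rw [hY', hYY]
        rw [hbar]
        have hcomm := cyc_append_comm (W₁ ++ Word.bar Yd ++ W₂) Yd
        have e2 : Yd ++ W₁ ++ Word.bar Yd ++ W₂ = Yd ++ (W₁ ++ Word.bar Yd ++ W₂) := by
          simp [List.append_assoc]
        rw [e2]
        exact hcomm

end CyclicWords
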